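/- For every real m×m matrix r, (1/2)[ (Σ_i r_{ii})² − Σ_{i,j} r_{ij} r_{ji} + (1/2) Σ_{i,j} (r_{ij} − r_{ji})² ] = S_2( λ( ½(r + rᵀ) ) ) + (3/4) Σ_{i<j} (r_{ij} − r_{ji})², where λ(½(r + rᵀ)) denotes the eigenvalues of the symmetric part of r. In other words, 𝓕_2(r) = F_2 of the symmetrization of r plus (3/4) times the squared antisymmetric part summed over i < j. -/

import Mathlib

open MeasureTheory Filter Topology

noncomputable section

/-- Action of a first-order vector field with coefficient vector `c` on a function `u`:
`(Xu)(x) = ∑ j c(x)_j D_j u(x) = Du(x)·c(x)`. -/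
def Xop {n : ℕ} (c : (Fin n → ℝ) → (Fin n → ℝ)) (u : (Fin n → ℝ) → ℝ)
    (x : Fin n → ℝ) : ℝ :=
  fderiv ℝ u x (c x)

/-- Lie bracket of the coefficient vector fields `c`, `d`. -/
def vfBracket {n : ℕ} (c d : (Fin n → ℝ) → (Fin n → ℝ)) (x : Fin n → ℝ) :
    Fin n → ℝ :=
  fun l => fderiv ℝ (fun y => d y l) x (c x) - fderiv ℝ (fun y => c y l) x (d x)

/-- The sub-Laplacian `Δ_X u = ∑ i X_i X_i u`. -/
def subLap {n m : ℕ} (b : Fin m → (Fin n → ℝ) → (Fin n → ℝ))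
    (u : (Fin n → ℝ) → ℝ) (x : Fin n → ℝ) : ℝ :=
  ∑ i, Xop (b i) (Xop (b i) u) x

/-- The commutator `[X_i, X_j] u = X_i X_j u - X_j X_i u`. -/
def commOp {n m : ℕ} (b : Fin m → (Fin n → ℝ) → (Fin n → ℝ)) (i j : Fin m)
    (u : (Fin n → ℝ) → ℝ) (x : Fin n → ℝ) : ℝ :=
  Xop (b i) (Xop (b j) u) x - Xop (b j) (Xop (b i) u) x

/-- The symmetric Hessian `X_s² u = [½ (X_i X_j + X_j X_i) u]`. -/
def symmHess {n m : ℕ} (b : Fin m → (Fin n → ℝ) → (Fin n → ℝ))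
    (u : (Fin n → ℝ) → ℝ) (x : Fin n → ℝ) : Matrix (Fin m) (Fin m) ℝ :=
  fun i j => (Xop (b i) (Xop (b j) u) x + Xop (b j) (Xop (b i) u) x) / 2

theorem symmHess_isHermitian {n m : ℕ} (b : Fin m → (Fin n → ℝ) → (Fin n → ℝ))
    (u : (Fin n → ℝ) → ℝ) (x : Fin n → ℝ) : (symmHess b u x).IsHermitian := by
  unfold Matrix.IsHermitian
  ext i j
  simp only [Matrix.conjTranspose_apply, symmHess, star_trivial]
  ring

/-- Eigenvalues of the symmetric Hessian. -/
def hessEig {n m : ℕ} (b : Fin m → (Fin n → ℝ) → (Fin n → ℝ))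
    (u : (Fin n → ℝ) → ℝ) (x : Fin n → ℝ) : Fin m → ℝ :=
  (symmHess_isHermitian b u x).eigenvalues

/-- `k`-th elementary symmetric function of `m` real numbers. -/
def esymmF {m : ℕ} (k : ℕ) (lam : Fin m → ℝ) : ℝ :=
  ∑ s ∈ Finset.powersetCard k (Finset.univ : Finset (Fin m)), ∏ i ∈ s, lam i

/-- `S_{j,i}(λ)`: the `j`-th elementary symmetric function with the variable `λ_i` set to `0`. -/
def esymmDrop {m : ℕ} (j : ℕ) (i : Fin m) (lam : Fin m → ℝ) : ℝ :=
  ∑ s ∈ Finset.powersetCard j ((Finset.univ : Finset (Fin m)).erase i), ∏ l ∈ s, lam l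

/-- `u` is `k`-convex with respect to the vector fields `b` on `Ω`:
`S_j(λ(X_s²u)) ≥ 0` on `Ω` for `j = 1, …, k`. -/
def IsKConvex {n m : ℕ} (Ω : Set (Fin n → ℝ)) (b : Fin m → (Fin n → ℝ) → (Fin n → ℝ))
    (k : ℕ) (u : (Fin n → ℝ) → ℝ) : Prop :=
  ∀ x ∈ Ω, ∀ j, 1 ≤ j → j ≤ k → 0 ≤ esymmF j (hessEig b u x)

/-- `F_2[u] = S_2(λ(X_s²u))`. -/
def F2fun {n m : ℕ} (b : Fin m → (Fin n → ℝ) → (Fin n → ℝ))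
    (u : (Fin n → ℝ) → ℝ) (x : Fin n → ℝ) : ℝ :=
  esymmF 2 (hessEig b u x)

/-- `𝓔_2[u] = ∑_{i<j} ([X_i,X_j]u)²`. -/
def E2fun {n m : ℕ} (b : Fin m → (Fin n → ℝ) → (Fin n → ℝ))
    (u : (Fin n → ℝ) → ℝ) (x : Fin n → ℝ) : ℝ :=
  ∑ i : Fin m, ∑ j ∈ Finset.Ioi i, (commOp b i j u x) ^ 2

/-- `𝓕_2[u] = F_2[u] + (3/4) 𝓔_2[u]`. -/
def calF2 {n m : ℕ} (b : Fin m → (Fin n → ℝ) → (Fin n → ℝ))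
    (u : (Fin n → ℝ) → ℝ) (x : Fin n → ℝ) : ℝ :=
  F2fun b u x + (3 / 4) * E2fun b u x

/-- `|Xu|(x)`, the length of the subelliptic gradient. -/
def XgradNorm {n m : ℕ} (b : Fin m → (Fin n → ℝ) → (Fin n → ℝ))
    (u : (Fin n → ℝ) → ℝ) (x : Fin n → ℝ) : ℝ :=
  Real.sqrt (∑ i, (Xop (b i) u x) ^ 2)

/-- Condition (i): each `X_i` is divergence free, i.e. anti-self-adjoint. -/
def DivFree {n m : ℕ} (Ω : Set (Fin n → ℝ))
    (b : Fin m → (Fin n → ℝ) → (Fin n → ℝ)) : Prop :=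
  ∀ i : Fin m, ∀ x ∈ Ω, ∑ j, fderiv ℝ (fun y => b i y j) x (Pi.single j 1) = 0

/-- The set of iterated Lie brackets generated by the fields `b`. -/
inductive LieGen {n m : ℕ} (b : Fin m → (Fin n → ℝ) → (Fin n → ℝ)) :
    ((Fin n → ℝ) → (Fin n → ℝ)) → Prop
  | base (i : Fin m) : LieGen b (b i)
  | bracket {c d : (Fin n → ℝ) → (Fin n → ℝ)} :
      LieGen b c → LieGen b d → LieGen b (fun x => vfBracket c d x)

/-- Condition (ii): the Hörmander condition; iterated commutators span `ℝⁿ` at each point. -/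
def Hormander {n m : ℕ} (Ω : Set (Fin n → ℝ))
    (b : Fin m → (Fin n → ℝ) → (Fin n → ℝ)) : Prop :=
  ∀ x ∈ Ω, Submodule.span ℝ {v : Fin n → ℝ | ∃ c, LieGen b c ∧ c x = v} = ⊤

/-- Condition (iii): all second commutators `[X_i,[X_i,X_j]]` vanish. -/
def SecondCommVanish {n m : ℕ} (Ω : Set (Fin n → ℝ))
    (b : Fin m → (Fin n → ℝ) → (Fin n → ℝ)) : Prop :=
  ∀ i j : Fin m, ∀ x ∈ Ω, vfBracket (b i) (fun y => vfBracket (b i) (b j) y) x = 0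

/-- `Ω' ⊂⊂ Ω`: `Ω'` is open and compactly contained in `Ω`. -/
def CptIn {n : ℕ} (Ω' Ω : Set (Fin n → ℝ)) : Prop :=
  IsOpen Ω' ∧ IsCompact (closure Ω') ∧ closure Ω' ⊆ Ω

/-- A sub-unitary (piecewise C¹) curve on `[0,T]` with respect to the fields `b`. -/
def IsSubunitary {n m : ℕ} (b : Fin m → (Fin n → ℝ) → (Fin n → ℝ)) (T : ℝ)
    (γ : ℝ → Fin n → ℝ) : Prop :=
  ContinuousOn γ (Set.Icc 0 T) ∧
  ∃ S : Finset ℝ, ∀ t ∈ Set.Ioo 0 T, t ∉ S →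
    ∃ γ' : Fin n → ℝ, HasDerivAt γ γ' t ∧
      ∀ ξ : Fin n → ℝ, (∑ j, γ' j * ξ j) ^ 2 ≤ ∑ i, (∑ j, b i (γ t) j * ξ j) ^ 2

/-- The Carnot–Carathéodory distance associated with the fields `b`. -/
def ccDist {n m : ℕ} (b : Fin m → (Fin n → ℝ) → (Fin n → ℝ))
    (x y : Fin n → ℝ) : ℝ :=
  sInf {T : ℝ | 0 < T ∧ ∃ γ : ℝ → Fin n → ℝ,
    IsSubunitary b T γ ∧ γ 0 = x ∧ γ T = y}

/-- The C-C ball of radius `R` about `x`. -/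
def ccBall {n m : ℕ} (b : Fin m → (Fin n → ℝ) → (Fin n → ℝ))
    (x : Fin n → ℝ) (R : ℝ) : Set (Fin n → ℝ) :=
  {y | ccDist b x y < R}

/-- The doubling property `|B_{tR}(x)| ≥ C t^Q |B_R(x)|`. -/
def DoublingDim {n m : ℕ} (Ω : Set (Fin n → ℝ))
    (b : Fin m → (Fin n → ℝ) → (Fin n → ℝ)) (Q : ℕ) : Prop :=
  ∃ C > (0 : ℝ), ∃ R0 > (0 : ℝ), ∀ x ∈ Ω, ∀ t ∈ Set.Ioo (0 : ℝ) 1,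
    ∀ R : ℝ, 0 < R → R < R0 →
      C * t ^ Q * (volume (ccBall b x R)).toReal ≤ (volume (ccBall b x (t * R))).toReal

/-- `Q` is the homogeneous dimension of the system `b` in `Ω`. -/
def IsHomDim {n m : ℕ} (Ω : Set (Fin n → ℝ))
    (b : Fin m → (Fin n → ℝ) → (Fin n → ℝ)) (Q : ℕ) : Prop :=
  0 < Q ∧ DoublingDim Ω b Q ∧ ∀ Q' : ℕ, 0 < Q' → DoublingDim Ω b Q' → Q ≤ Q'

/-- The class `φ^k(Ω)` of `L¹_loc(Ω)` limits of smooth `k`-convex functions. -/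
def PhiK {n m : ℕ} (Ω : Set (Fin n → ℝ)) (b : Fin m → (Fin n → ℝ) → (Fin n → ℝ))
    (k : ℕ) (u : (Fin n → ℝ) → ℝ) : Prop :=
  LocallyIntegrableOn u Ω ∧
  ∀ Ω' : Set (Fin n → ℝ), CptIn Ω' Ω →
    ∃ us : ℕ → (Fin n → ℝ) → ℝ,
      (∀ l, ContDiffOn ℝ 2 (us l) Ω' ∧ IsKConvex Ω' b k (us l)) ∧
      ∀ K : Set (Fin n → ℝ), K ⊆ Ω' → IsCompact K →
        Tendsto (fun l => ∫ x in K, |us l x - u x|) atTop (𝓝 0)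

end

lemma esymm2_eq {ι : Type*} [DecidableEq ι] (s : Finset ι) (f : ι → ℝ) :
    ∑ t ∈ s.powersetCard 2, ∏ i ∈ t, f i
      = ((∑ i ∈ s, f i) ^ 2 - ∑ i ∈ s, f i ^ 2) / 2 := by
  induction s using Finset.induction_on with
  | empty =>
    rw [Finset.powersetCard_eq_empty.mpr (by simp)]
    simp
  | @insert a s ha ih =>
    rw [Finset.powersetCard_succ_insert ha, Finset.sum_union ?disj, Finset.sum_image ?inj, ih]
    case disj =>
      rw [Finset.disjoint_left]
      intro t ht ht'
      simp only [Finset.mem_image] at ht'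
      obtain ⟨t', _, rfl⟩ := ht'
      exact ha ((Finset.mem_powersetCard.mp ht).1 (Finset.mem_insert_self a t'))
    case inj =>
      intro t1 h1 t2 h2 h
      rw [Finset.mem_coe, Finset.mem_powersetCard] at h1 h2
      have e1 : a ∉ t1 := fun h => ha (h1.1 h)
      have e2 : a ∉ t2 := fun h => ha (h2.1 h)
      rw [← Finset.erase_insert e1, ← Finset.erase_insert e2, h]
    have h2 : ∀ t ∈ s.powersetCard 1, ∏ i ∈ insert a t, f i = f a * ∏ i ∈ t, f i := by
      intro t ht
      rw [Finset.mem_powersetCard] at ht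
      exact Finset.prod_insert (fun h => ha (ht.1 h))
    rw [Finset.sum_congr rfl h2]
    have h1 : ∑ t ∈ s.powersetCard 1, f a * ∏ i ∈ t, f i = f a * ∑ i ∈ s, f i := by
      rw [Finset.powersetCard_one, Finset.sum_map]
      simp [Finset.mul_sum]
    rw [h1, Finset.sum_insert ha, Finset.sum_insert ha]
    ring

lemma double_sum_eq {m : ℕ} (g : Fin m → Fin m → ℝ) (hsym : ∀ i j, g i j = g j i)
    (hdiag : ∀ i, g i i = 0) :
    ∑ i, ∑ j, g i j = 2 * ∑ i, ∑ j ∈ Finset.Ioi i, g i j := by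
  have hIoi : ∀ (h : Fin m → Fin m → ℝ) (i : Fin m),
      ∑ j, (if i < j then h i j else 0) = ∑ j ∈ Finset.Ioi i, h i j := by
    intro h i
    rw [← Finset.sum_filter]
    congr 1
    ext j
    simp
  have key : ∀ i j : Fin m, g i j =
      (if i < j then g i j else 0) + (if j < i then g i j else 0) := by
    intro i j
    rcases lt_trichotomy i j with h | h | h
    · simp [h, asymm h]
    · subst h; simp [hdiag i]
    · simp [h, asymm h]
  calc ∑ i, ∑ j, g i j
      = ∑ i, ∑ j, ((if i < j then g i j else 0) + (if j < i then g i j else 0)) := by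
        simp_rw [← key]
    _ = (∑ i, ∑ j, (if i < j then g i j else 0))
        + ∑ i, ∑ j, (if j < i then g i j else 0) := by
        simp [Finset.sum_add_distrib]
    _ = (∑ i, ∑ j ∈ Finset.Ioi i, g i j) + ∑ j, ∑ i, (if j < i then g i j else 0) := by
        rw [Finset.sum_comm (f := fun i j => if j < i then g i j else 0)]
        simp_rw [hIoi]
    _ = (∑ i, ∑ j ∈ Finset.Ioi i, g i j) + ∑ j, ∑ i ∈ Finset.Ioi j, g i j := by
        simp_rw [hIoi (fun j i => g i j)]
    _ = 2 * ∑ i, ∑ j ∈ Finset.Ioi i, g i j := by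
        have : ∀ j, ∑ i ∈ Finset.Ioi j, g i j = ∑ i ∈ Finset.Ioi j, g j i := by
          intro j; exact Finset.sum_congr rfl fun i _ => hsym i j
        simp_rw [this]
        ring

lemma trace_eq_sum_eigs {m : ℕ} {A : Matrix (Fin m) (Fin m) ℝ} (hA : A.IsHermitian) :
    (∑ i, hA.eigenvalues i) = ∑ i, A i i ∧
    (∑ i, hA.eigenvalues i ^ 2) = ∑ i, ∑ j, A i j * A j i := by
  classical
  set U : Matrix (Fin m) (Fin m) ℝ := (hA.eigenvectorUnitary : Matrix (Fin m) (Fin m) ℝ) with hU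
  have hUU : star U * U = 1 := Matrix.mem_unitaryGroup_iff'.mp (hA.eigenvectorUnitary).2
  have hUU' : U * star U = 1 := Matrix.mem_unitaryGroup_iff.mp (hA.eigenvectorUnitary).2
  have hdiag : star U * A * U = Matrix.diagonal hA.eigenvalues := by
    have := hA.conjStarAlgAut_star_eigenvectorUnitary
    rw [Unitary.conjStarAlgAut_star_apply] at this
    rw [← hU] at this
    rw [this]
    ext i j
    simp [Matrix.diagonal_apply]
  constructor
  · have h1 : Matrix.trace (star U * A * U) = Matrix.trace A := by
      rw [Matrix.trace_mul_cycle, hUU', one_mul]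
    rw [hdiag, Matrix.trace_diagonal] at h1
    simpa [Matrix.trace] using h1
  · have h2 : star U * (A * A) * U = Matrix.diagonal (fun i => hA.eigenvalues i ^ 2) := by
      have cancel : ∀ X : Matrix (Fin m) (Fin m) ℝ, U * (star U * X) = X := by
        intro X; rw [← mul_assoc, hUU', one_mul]
      have : star U * (A * A) * U = (star U * A * U) * (star U * A * U) := by
        simp only [mul_assoc]
        rw [cancel]
      rw [this, hdiag, Matrix.diagonal_mul_diagonal]
      simp [sq]
    have h3 : Matrix.trace (star U * (A * A) * U) = Matrix.trace (A * A) := by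
      rw [Matrix.trace_mul_cycle, hUU', one_mul]
    rw [h2, Matrix.trace_diagonal] at h3
    rw [h3]
    simp [Matrix.trace, Matrix.mul_apply, Matrix.diag]

/-- The symmetric part `½(r + rᵀ)` of a real square matrix. -/
noncomputable def symPart {m : ℕ} (r : Matrix (Fin m) (Fin m) ℝ) :
    Matrix (Fin m) (Fin m) ℝ :=
  (1 / 2 : ℝ) • (r + r.transpose)

theorem symPart_isHermitian {m : ℕ} (r : Matrix (Fin m) (Fin m) ℝ) :
    (symPart r).IsHermitian := by
  unfold Matrix.IsHermitian symPart
  ext i j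
  simp only [Matrix.conjTranspose_apply, Matrix.smul_apply, Matrix.add_apply,
    Matrix.transpose_apply, star_trivial, smul_eq_mul]
  ring

/-- identity (2.4). For every real `m × m` matrix `r`,
`𝓕₂(r) = S₂(λ(½(r + rᵀ))) + (3/4) ∑_{i<j} (r_{ij} - r_{ji})²`. -/
theorem calF2_matrix_identity (m : ℕ) (r : Matrix (Fin m) (Fin m) ℝ) :
    (1 / 2 : ℝ) * ((∑ i, r i i) ^ 2 - (∑ i : Fin m, ∑ j : Fin m, r i j * r j i) +
        (1 / 2) * ∑ i : Fin m, ∑ j : Fin m, (r i j - r j i) ^ 2) =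
      esymmF 2 (symPart_isHermitian r).eigenvalues +
        (3 / 4) * ∑ i : Fin m, ∑ j ∈ Finset.Ioi i, (r i j - r j i) ^ 2 := by
  classical
  have hA := symPart_isHermitian r
  obtain ⟨htr, htr2⟩ := trace_eq_sum_eigs hA
  have hA1 : ∀ i j, symPart r i j = (r i j + r j i) / 2 := by
    intro i j
    simp [symPart, Matrix.transpose_apply]
    ring
  have hT : ∑ i, hA.eigenvalues i = ∑ i, r i i := by
    rw [htr]
    exact Finset.sum_congr rfl fun i _ => by rw [hA1]; ring
  have hQ : ∑ i, ∑ j, symPart r i j * symPart r j i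
      = (∑ i, ∑ j, r i j * r j i) + (1/4) * ∑ i, ∑ j, (r i j - r j i) ^ 2 := by
    simp_rw [hA1, Finset.mul_sum, ← Finset.sum_add_distrib]
    exact Finset.sum_congr rfl fun i _ => Finset.sum_congr rfl fun j _ => by ring
  have hD : ∑ i : Fin m, ∑ j : Fin m, (r i j - r j i) ^ 2
      = 2 * ∑ i : Fin m, ∑ j ∈ Finset.Ioi i, (r i j - r j i) ^ 2 :=
    double_sum_eq _ (fun i j => by ring) (fun i => by ring)
  have hE : esymmF 2 hA.eigenvalues
      = ((∑ i, r i i) ^ 2 - ((∑ i, ∑ j, r i j * r j i)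
          + (1/4) * ∑ i, ∑ j, (r i j - r j i) ^ 2)) / 2 := by
    unfold esymmF
    rw [esymm2_eq, hT, htr2, hQ]
  rw [hE]
  linear_combination (3/8 : ℝ) * hD
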